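/- arXiv:1304.6312 — 2 statements merged into one kernel-verified Lean document; each statement's English description precedes it below -/
import Mathlib

section
/- Let F be a free group with basis {a, b}, and for an integer o ≥ 2 let G = (ℤ/oℤ) ∗ ℤ be the quotient of F by the normal closure of a^o. If q : F → G is the quotient map, then scl_G(q([a,b])) ≤ 1/2 − 1/o. -/
open scoped commutatorElement

/-- Commutator length: least `n` such that `w` is a product of `n` commutators. -/
noncomputable def cl {G : Type*} [Group G] (w : G) : ℕ :=
  sInf {n : ℕ | ∃ f g : Fin n → G, w = (List.ofFn fun i => ⁅f i, g i⁆).prod}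

/-- Stable commutator length, defined as `inf_{n ≥ 1} cl(wⁿ)/n`. -/
noncomputable def scl {G : Type*} [Group G] (w : G) : ℝ :=
  ⨅ n : ℕ+, (cl (w ^ (n : ℕ)) : ℝ) / (n : ℕ)

section PC

variable {G : Type*} [Group G]

/-- `w` is a product of `k` commutators. -/
def IsPC (k : ℕ) (w : G) : Prop :=
  ∃ l : List (G × G), l.length = k ∧ w = (l.map fun p => ⁅p.1, p.2⁆).prod

lemma isPC_one : IsPC 0 (1 : G) := ⟨[], rfl, rfl⟩

lemma isPC_comm (a b : G) : IsPC 1 ⁅a, b⁆ := ⟨[(a, b)], rfl, by simp⟩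

lemma IsPC.mul {k m : ℕ} {w v : G} (hw : IsPC k w) (hv : IsPC m v) :
    IsPC (k + m) (w * v) := by
  obtain ⟨l1, h1, e1⟩ := hw
  obtain ⟨l2, h2, e2⟩ := hv
  exact ⟨l1 ++ l2, by simp [h1, h2], by simp [e1, e2]⟩

lemma conj_list_prod (g : G) (l : List G) :
    g * l.prod * g⁻¹ = (l.map fun x => g * x * g⁻¹).prod := by
  induction l with
  | nil => simp
  | cons x l ih => simp only [List.prod_cons, List.map_cons, ← ih]; group

lemma conj_commutator (g a b : G) :
    g * ⁅a, b⁆ * g⁻¹ = ⁅g * a * g⁻¹, g * b * g⁻¹⁆ := by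
  simp only [commutatorElement_def]; group

lemma IsPC.conj {k : ℕ} {w : G} (h : IsPC k w) (g : G) : IsPC k (g * w * g⁻¹) := by
  obtain ⟨l, hl, e⟩ := h
  refine ⟨l.map fun p => (g * p.1 * g⁻¹, g * p.2 * g⁻¹), by simp [hl], ?_⟩
  have hfun : ((fun x => g * x * g⁻¹) ∘ fun p : G × G => ⁅p.1, p.2⁆)
      = ((fun p : G × G => ⁅p.1, p.2⁆) ∘ fun p : G × G => (g * p.1 * g⁻¹, g * p.2 * g⁻¹)) := by
    funext p
    exact conj_commutator g p.1 p.2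
  rw [e, conj_list_prod, List.map_map, List.map_map, hfun]

lemma conj_pow' (g a : G) (n : ℕ) : (g * a * g⁻¹) ^ n = g * a ^ n * g⁻¹ := by
  induction n with
  | zero => simp
  | succ n ih => rw [pow_succ, pow_succ, ih]; group

lemma IsPC.inv {k : ℕ} {w : G} (h : IsPC k w) : IsPC k w⁻¹ := by
  obtain ⟨l, hl, e⟩ := h
  refine ⟨l.reverse.map fun p => (p.2, p.1), by simp [hl], ?_⟩
  subst e
  clear hl
  induction l with
  | nil => simp
  | cons p l ih =>
      simp only [List.map_cons, List.prod_cons, mul_inv_rev, List.reverse_cons,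
        List.map_append, List.prod_append, ih, List.map_nil, List.prod_cons,
        List.prod_nil, mul_one, commutatorElement_inv]

/-- The master identity : the key step of the genus bound. -/
lemma key_step (x y z : G) (M : ℕ) (hz : z = x * y) :
    x ^ (M + 2) * y ^ (M + 2) * (z ^ (M + 2))⁻¹ =
      (x ^ M * ⁅x ^ 2 * y ^ (M + 1) * x⁻¹, y⁻¹ * x⁻¹ ^ 2⁆ * (x ^ M)⁻¹) *
        (x ^ M * y ^ M * (z ^ M)⁻¹) := by
  have h2 : z ^ 2 = x * y * (x * y) := by rw [hz, pow_two]
  rw [pow_add x M 2, pow_add y M 2, pow_add z M 2, h2]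
  group

/-- `x^M y^M (xy)^{-M}` is a product of `k` commutators for `M = 2k+1`. -/
lemma key3 (x y : G) (k : ℕ) :
    IsPC k (x ^ (2 * k + 1) * y ^ (2 * k + 1) * ((x * y) ^ (2 * k + 1))⁻¹) := by
  induction k with
  | zero =>
      have : x ^ (2 * 0 + 1) * y ^ (2 * 0 + 1) * ((x * y) ^ (2 * 0 + 1))⁻¹ = 1 := by
        group
      rw [this]; exact isPC_one
  | succ k ih =>
      have h2 : 2 * (k + 1) + 1 = (2 * k + 1) + 2 := by ring
      rw [h2, key_step x y (x * y) (2 * k + 1) rfl]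
      have := ((isPC_comm (x ^ 2 * y ^ (2 * k + 1 + 1) * x⁻¹) (y⁻¹ * x⁻¹ ^ 2)).conj
        (x ^ (2 * k + 1))).mul ih
      simpa [Nat.add_comm] using this

/-- Merging lemma: a product of `M`-th powers differs from the `M`-th power of the
product by `(length - 1) * k` commutators, where `M = 2k+1`. -/
lemma merge (k : ℕ) (l : List G) (x : G) :
    ∃ w : G, IsPC (l.length * k) w ∧
      ((x :: l).map (· ^ (2 * k + 1))).prod = w * ((x :: l).prod) ^ (2 * k + 1) := by
  induction l generalizing x with
  | nil => exact ⟨1, by simpa using isPC_one, by simp⟩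
  | cons y l ih =>
      obtain ⟨w, hw, he⟩ := ih y
      refine ⟨(x ^ (2 * k + 1) * w * (x ^ (2 * k + 1))⁻¹) *
        (x ^ (2 * k + 1) * ((y :: l).prod) ^ (2 * k + 1) *
          ((x * (y :: l).prod) ^ (2 * k + 1))⁻¹), ?_, ?_⟩
      · have h1 := (hw.conj (x ^ (2 * k + 1))).mul (key3 x ((y :: l).prod) k)
        rw [List.length_cons, Nat.succ_mul]
        exact h1
      · rw [List.map_cons, List.prod_cons, he, List.prod_cons (a := x) (l := y :: l)]
        generalize (x * (y :: l).prod) ^ (2 * k + 1) = Q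
        group

/-- Extraction lemma: a product of conjugates of `u^M` equals `u^{(length)·M}`
times a product of `length` commutators. -/
lemma extract (u : G) (M : ℕ) (L : List G) :
    ∃ w : G, IsPC L.length w ∧
      (L.map fun g => g * u ^ M * g⁻¹).prod = u ^ (L.length * M) * w := by
  induction L with
  | nil => exact ⟨1, isPC_one, by simp⟩
  | cons g L ih =>
      obtain ⟨w, hw, he⟩ := ih
      refine ⟨((u ^ (L.length * M))⁻¹ * ⁅(u ^ M)⁻¹, g⁆ * ((u ^ (L.length * M))⁻¹)⁻¹) * w,
        ?_, ?_⟩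
      · have h1 := ((isPC_comm (u ^ M)⁻¹ g).conj (u ^ (L.length * M))⁻¹).mul hw
        have h2 : (g :: L).length = 1 + L.length := by
          rw [List.length_cons, Nat.add_comm]
        rw [h2]
        exact h1
      · have hlen : (g :: L).length * M = L.length * M + M := by
          rw [List.length_cons, Nat.succ_mul]
        simp only [List.map_cons, List.prod_cons, he, hlen, pow_add]
        simp only [commutatorElement_def]
        group

/-- Telescoping product of conjugates of the commutator. -/
lemma telescope (t v : G) (j : ℕ) :
    ((List.range j).reverse.map fun i => t ^ (i + 1) * ⁅t, v⁆ * (t ^ (i + 1))⁻¹).prod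
      = t ^ (j + 1) * v * (t ^ (j + 1))⁻¹ * (t * v * t⁻¹)⁻¹ := by
  induction j with
  | zero => simp only [List.range_zero, List.reverse_nil, List.map_nil, List.prod_nil]; group
  | succ j ih =>
      rw [List.range_succ, List.reverse_append]
      simp only [List.reverse_cons, List.reverse_nil, List.nil_append, List.singleton_append,
        List.map_cons, List.prod_cons, ih]
      simp only [commutatorElement_def]
      group

/-- The central counting bound: if `t^n = 1` (with `n = m+2`), then
`⁅t,v⁆^(n(2k+1))` is a product of `m k + n` commutators. -/
lemma main_pc (t v : G) (m k : ℕ) (ht : t ^ (m + 2) = 1) :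
    IsPC (m * k + (m + 2)) (⁅t, v⁆ ^ ((m + 2) * (2 * k + 1))) := by
  set M := 2 * k + 1 with hM
  set u := ⁅t, v⁆ with hu
  -- the list of conjugates x_i = t^(i+1) u t^(-(i+1)), i = m, m-1, ..., 0
  set f : ℕ → G := fun i => t ^ (i + 1) * u * (t ^ (i + 1))⁻¹ with hf
  have hlist : (List.range (m + 1)).reverse.map f
      = f m :: ((List.range m).reverse.map f) := by
    rw [List.range_succ, List.reverse_append]
    simp
  -- merge the first m+1 factors
  obtain ⟨w, hw, he⟩ := merge k ((List.range m).reverse.map f) (f m)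
  rw [← hlist] at he
  have hlen : ((List.range m).reverse.map f).length = m := by simp
  rw [hlen] at hw
  -- the product of the list is u⁻¹
  have hprod : ((List.range (m + 1)).reverse.map f).prod = u⁻¹ := by
    rw [hf, hu]
    rw [telescope t v (m + 1)]
    have ht' : t ^ (m + 1 + 1) = 1 := by
      have : m + 1 + 1 = m + 2 := by omega
      rw [this]; exact ht
    rw [ht']
    simp only [commutatorElement_def]
    group
  rw [hprod] at he
  -- so the product of M-th powers of the list, times u^M, is w
  have he2 : (((List.range (m + 1)).reverse.map f).map (· ^ M)).prod * u ^ M = w := by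
    rw [he, inv_pow, hM]
    group
  -- rewrite the left side as a product of conjugates of u^M
  set L : List G := (((List.range (m + 1)).reverse.map fun i => t ^ (i + 1)) ++ [1]) with hL
  have hLmap : (L.map fun g => g * u ^ M * g⁻¹).prod
      = (((List.range (m + 1)).reverse.map f).map (· ^ M)).prod * u ^ M := by
    have hfun : ((fun g => g * u ^ M * g⁻¹) ∘ fun i : ℕ => t ^ (i + 1))
        = ((· ^ M) ∘ f) := by
      funext i
      simp only [Function.comp_apply, hf]
      rw [conj_pow']
    rw [hL, List.map_append, List.prod_append, List.map_map, List.map_map, hfun]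
    simp
  have hLlen : L.length = m + 2 := by simp [hL]
  obtain ⟨w', hw', he'⟩ := extract u M L
  rw [hLmap, he2, hLlen] at he'
  -- u ^ ((m+2) * M) = w * w'⁻¹
  have : u ^ ((m + 2) * M) = w * w'⁻¹ := by
    rw [he']
    group
  rw [this]
  rw [hLlen] at hw'
  exact hw.mul hw'.inv

/-- From a product-of-commutators witness we get a bound on `cl`. -/
lemma cl_le_of_isPC {k : ℕ} {w : G} (h : IsPC k w) : cl w ≤ k := by
  obtain ⟨l, hl, e⟩ := h
  subst hl
  apply Nat.sInf_le
  refine ⟨fun i => (l.get i).1, fun i => (l.get i).2, ?_⟩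
  rw [e]
  congr 1
  conv_lhs => rw [← List.ofFn_get l, List.map_ofFn]
  rfl

lemma scl_le_cl_div (w : G) (N : ℕ+) :
    scl w ≤ (cl (w ^ (N : ℕ)) : ℝ) / ((N : ℕ) : ℝ) := by
  apply ciInf_le
  refine ⟨0, ?_⟩
  rintro x ⟨i, rfl⟩
  positivity

/-- Abstract main theorem: if `t^n = 1` with `n ≥ 2`, then
`scl ⁅t,v⁆ ≤ 1/2 - 1/n`. -/
theorem scl_commutator_le (t v : G) (n : ℕ) (hn : 2 ≤ n) (ht : t ^ n = 1) :
    scl ⁅t, v⁆ ≤ 1 / 2 - 1 / (n : ℝ) := by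
  obtain ⟨m, rfl⟩ : ∃ m, n = m + 2 := ⟨n - 2, by omega⟩
  set c : ℝ := ((m : ℝ) + 2) with hc
  have hc0 : (0 : ℝ) < c := by positivity
  have hcn : ((m + 2 : ℕ) : ℝ) = c := by push_cast [hc]; ring
  -- step 1 : for every k, scl ≤ (m k + (m+2)) / ((m+2)(2k+1))
  have H1 : ∀ k : ℕ, scl ⁅t, v⁆ ≤
      ((m : ℝ) * k + ((m : ℝ) + 2)) / (((m : ℝ) + 2) * (2 * k + 1)) := by
    intro k
    have hNpos : 0 < (m + 2) * (2 * k + 1) := by positivity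
    let N : ℕ+ := ⟨(m + 2) * (2 * k + 1), hNpos⟩
    have hNv : (N : ℕ) = (m + 2) * (2 * k + 1) := rfl
    have h1 : scl ⁅t, v⁆ ≤ (cl (⁅t, v⁆ ^ ((N : ℕ))) : ℝ) / ((N : ℕ) : ℝ) :=
      scl_le_cl_div _ N
    have h2 : cl (⁅t, v⁆ ^ ((N : ℕ))) ≤ m * k + (m + 2) := by
      rw [hNv]
      exact cl_le_of_isPC (main_pc t v m k ht)
    have h3 : ((N : ℕ) : ℝ) = ((m : ℝ) + 2) * (2 * (k : ℝ) + 1) := by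
      rw [hNv]; push_cast; ring
    have hNR : (0 : ℝ) < ((N : ℕ) : ℝ) := by
      rw [h3]; positivity
    calc scl ⁅t, v⁆ ≤ (cl (⁅t, v⁆ ^ ((N : ℕ))) : ℝ) / ((N : ℕ) : ℝ) := h1
      _ ≤ ((m * k + (m + 2) : ℕ) : ℝ) / ((N : ℕ) : ℝ) := by
          have hb : (cl (⁅t, v⁆ ^ ((N : ℕ))) : ℝ) ≤ ((m * k + (m + 2) : ℕ) : ℝ) := by
            exact_mod_cast h2
          gcongr
      _ = ((m : ℝ) * k + ((m : ℝ) + 2)) / (((m : ℝ) + 2) * (2 * k + 1)) := by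
          rw [h3]; push_cast; ring_nf
  -- step 2 : the bound tends to 1/2 - 1/(m+2); use an ε of room
  have H2 : ∀ k : ℕ, ((m : ℝ) * k + ((m : ℝ) + 2)) / (((m : ℝ) + 2) * (2 * k + 1))
      ≤ (1 / 2 - 1 / c) + 1 / ((k : ℝ) + 1) := by
    intro k
    have hk0 : (0 : ℝ) ≤ (k : ℝ) := Nat.cast_nonneg k
    have hkp : (0 : ℝ) < 2 * (k : ℝ) + 1 := by linarith
    have hkq : (0 : ℝ) < (k : ℝ) + 1 := by linarith
    have hm0 : (0 : ℝ) ≤ (m : ℝ) := Nat.cast_nonneg m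
    have key : ((m : ℝ) * k + ((m : ℝ) + 2)) / (((m : ℝ) + 2) * (2 * k + 1))
        = (1 / 2 - 1 / c) + (c + 2) / (2 * c * (2 * k + 1)) := by
      rw [hc]
      field_simp
      ring
    rw [key]
    have hbound : (c + 2) / (2 * c * (2 * k + 1)) ≤ 1 / ((k : ℝ) + 1) := by
      rw [div_le_div_iff₀ (by positivity) hkq]
      rw [hc]
      nlinarith [mul_nonneg hm0 hk0]
    linarith
  -- combine
  have H3 : ∀ ε : ℝ, 0 < ε → scl ⁅t, v⁆ ≤ (1 / 2 - 1 / c) + ε := by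
    intro ε hε
    obtain ⟨k, hk⟩ := exists_nat_one_div_lt hε
    calc scl ⁅t, v⁆ ≤ ((m : ℝ) * k + ((m : ℝ) + 2)) / (((m : ℝ) + 2) * (2 * k + 1)) := H1 k
      _ ≤ (1 / 2 - 1 / c) + 1 / ((k : ℝ) + 1) := H2 k
      _ ≤ (1 / 2 - 1 / c) + ε := by linarith
  have := le_of_forall_pos_le_add H3
  calc scl ⁅t, v⁆ ≤ 1 / 2 - 1 / c := this
    _ = 1 / 2 - 1 / ((m + 2 : ℕ) : ℝ) := by rw [hcn]

end PC

theorem stmt_9 (o : ℕ) (ho : 2 ≤ o) :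
    let F := FreeGroup Bool
    let a : F := FreeGroup.of true
    let b : F := FreeGroup.of false
    let N := Subgroup.normalClosure ({a ^ o} : Set F)
    let q := QuotientGroup.mk' N
    scl (q ⁅a, b⁆) ≤ 1 / 2 - 1 / (o : ℝ) := by
  intro F a b N q
  have hq : q ⁅a, b⁆ = ⁅q a, q b⁆ := map_commutatorElement q a b
  rw [hq]
  have ht : (q a) ^ o = 1 := by
    rw [← map_pow]
    rw [QuotientGroup.mk'_apply, QuotientGroup.eq_one_iff]
    exact Subgroup.subset_normalClosure (Set.mem_singleton _)
  exact scl_commutator_le (q a) (q b) o ho ht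
end

section
/- In the group G = ⟨a, b | a³ = 1, b² = 1⟩ ≅ ℤ/3ℤ ∗ ℤ/2ℤ ≅ PSL(2,ℤ), the element w = a·a·b·a·b lies in the commutator subgroup [G,G] and satisfies scl_G(w) = 0. -/
open scoped commutatorElement

/-- If some `g` conjugates `w` to `w⁻¹`, then every even power of `w` is a single
commutator. -/
lemma even_pow_eq_commutator {G : Type*} [Group G] {w g : G}
    (hc : g * w * g⁻¹ = w⁻¹) (n : ℕ) : w ^ (2 * n) = ⁅w ^ n, g⁆ := by
  have hw' : g * w⁻¹ * g⁻¹ = w := by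
    have h := congrArg (·⁻¹) hc
    simp only [mul_inv_rev, inv_inv] at h
    simpa [mul_assoc] using h
  have key : g * (w ^ n)⁻¹ * g⁻¹ = w ^ n := by
    rw [← inv_pow, ← conj_pow, hw']
  calc w ^ (2 * n) = w ^ n * w ^ n := by rw [two_mul, pow_add]
    _ = w ^ n * (g * (w ^ n)⁻¹ * g⁻¹) := by rw [key]
    _ = ⁅w ^ n, g⁆ := by simp [commutatorElement_def, mul_assoc]

lemma cl_commutator_le {G : Type*} [Group G] (x y : G) : cl ⁅x, y⁆ ≤ 1 := by
  apply Nat.sInf_le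
  exact ⟨fun _ => x, fun _ => y, by simp⟩

theorem stmt_10 :
    let rels : Set (FreeGroup Bool) :=
      {FreeGroup.of true ^ 3, FreeGroup.of false ^ 2}
    let G := PresentedGroup rels
    let a : G := PresentedGroup.of true
    let b : G := PresentedGroup.of false
    a * a * b * a * b ∈ commutator G ∧ scl (a * a * b * a * b) = 0 := by
  intro rels G a b
  -- relations
  have ha : a * (a * a) = 1 := by
    have : PresentedGroup.mk rels (FreeGroup.of true ^ 3) = 1 := by
      apply (QuotientGroup.eq_one_iff _).2
      exact Subgroup.subset_normalClosure (Or.inl rfl)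
    simpa [pow_succ, map_mul, mul_assoc, a, PresentedGroup.of] using this
  have hb : b * b = 1 := by
    have : PresentedGroup.mk rels (FreeGroup.of false ^ 2) = 1 := by
      apply (QuotientGroup.eq_one_iff _).2
      exact Subgroup.subset_normalClosure (Or.inr rfl)
    simpa [pow_succ, map_mul, mul_assoc, b, PresentedGroup.of] using this
  have haa : ∀ x : G, a * (a * (a * x)) = x := by
    intro x; rw [← mul_assoc, ← mul_assoc, mul_assoc a a a, ha, one_mul]
  have hbb : ∀ x : G, b * (b * x) = x := by
    intro x; rw [← mul_assoc, hb, one_mul]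
  have ha1 : a⁻¹ = a * a := inv_eq_of_mul_eq_one_right ha
  have hb1 : b⁻¹ = b := inv_eq_of_mul_eq_one_right hb
  set w : G := a * a * b * a * b with hw
  -- w is a commutator
  have hwc : w = ⁅a⁻¹, b⁆ := by
    simp [commutatorElement_def, ha1, hb1, hw, mul_assoc, haa]
  have hmem : w ∈ commutator G := by
    rw [hwc, commutator_def]
    exact Subgroup.commutator_mem_commutator (Subgroup.mem_top _) (Subgroup.mem_top _)
  refine ⟨hmem, ?_⟩
  -- conjugation of w to its inverse
  have hc : (a * a * b * a)⁻¹ * w * ((a * a * b * a)⁻¹)⁻¹ = w⁻¹ := by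
    simp [hw, mul_inv_rev, ha1, hb1, mul_assoc, haa, hbb]
  set g : G := (a * a * b * a)⁻¹
  -- each term of the infimum is nonneg
  have hnonneg : ∀ n : ℕ+, (0 : ℝ) ≤ (cl (w ^ (n : ℕ)) : ℝ) / (n : ℕ) := fun n =>
    div_nonneg (Nat.cast_nonneg _) (Nat.cast_nonneg _)
  have hbdd : BddBelow (Set.range fun n : ℕ+ => (cl (w ^ (n : ℕ)) : ℝ) / (n : ℕ)) :=
    ⟨0, by rintro x ⟨n, rfl⟩; exact hnonneg n⟩
  have hle : ∀ n : ℕ+, scl w ≤ 1 / (2 * (n : ℕ) : ℝ) := by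
    intro n
    have h2n : ((2 * n : ℕ+) : ℕ) = 2 * (n : ℕ) := rfl
    have hcl : cl (w ^ ((2 * n : ℕ+) : ℕ)) ≤ 1 := by
      rw [h2n, even_pow_eq_commutator hc (n : ℕ)]
      exact cl_commutator_le _ _
    calc scl w ≤ (cl (w ^ ((2 * n : ℕ+) : ℕ)) : ℝ) / ((2 * n : ℕ+) : ℕ) :=
          ciInf_le hbdd (2 * n)
      _ ≤ 1 / (2 * (n : ℕ) : ℝ) := by
          rw [h2n]
          push_cast
          gcongr
          exact_mod_cast hcl
  have h0 : (0 : ℝ) ≤ scl w := le_ciInf hnonneg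
  refine le_antisymm ?_ h0
  apply le_of_forall_pos_le_add
  intro ε hε
  obtain ⟨m, hm⟩ := exists_nat_gt (1 / ε)
  have hm1 : 1 ≤ m + 1 := Nat.le_add_left 1 m
  have := hle ⟨m + 1, Nat.succ_pos m⟩
  have hε' : 1 / (2 * ((m : ℝ) + 1)) ≤ ε := by
    rw [div_le_iff₀ (by positivity)]
    have h1 : 1 / ε < (m : ℝ) + 1 := hm.trans (by linarith)
    have := (div_lt_iff₀ hε).1 h1
    nlinarith
  calc scl w ≤ 1 / (2 * (((⟨m + 1, Nat.succ_pos m⟩ : ℕ+) : ℕ)) : ℝ) := this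
    _ ≤ ε := by push_cast; exact hε'
    _ ≤ 0 + ε := by linarith
end
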